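/- Let Y be a semilattice. Then every element of IG(Y) has a unique normal form: every congruence class of words in the free semigroup on {ē : e ∈ Y} contains exactly one irreducible word, and a word x̄₁⋯x̄ₙ is irreducible if and only if x_i and x_{i+1} are incomparable (x_i x_{i+1} ∉ {x_i, x_{i+1}}) for all i ∈ [1, n−1]. Consequently two words represent the same element of IG(Y) if and only if their normal forms coincide. -/

import Mathlib

/-! Common definitions: free idempotent generated semigroups over bands,
generalised Green's relations, and abundancy notions. -/

/-- `(e, f)` is a *basic pair* if `ef ∈ {e,f}` or `fe ∈ {e,f}`. -/
def basicPair {B : Type*} [Mul B] (e f : B) : Prop :=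
  e * f = e ∨ e * f = f ∨ f * e = e ∨ f * e = f

/-- The defining congruence of the free idempotent generated semigroup `IG B`:
the congruence on the free semigroup on `{ē : e ∈ B}` generated by the relations
`ē f̄ = (ef)‾` for basic pairs `(e, f)`. -/
def igCon (B : Type*) [Semigroup B] : Con (FreeSemigroup B) :=
  conGen fun w₁ w₂ => ∃ e f : B, basicPair e f ∧
    w₁ = FreeSemigroup.of e * FreeSemigroup.of f ∧ w₂ = FreeSemigroup.of (e * f)

/-- The free idempotent generated semigroup over a band `B`. -/
abbrev IG (B : Type*) [Semigroup B] := (igCon B).Quotient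

/-- The canonical generator `ē` of `IG B`. -/
def igOf {B : Type*} [Semigroup B] (e : B) : IG B :=
  ((FreeSemigroup.of e : FreeSemigroup B) : (igCon B).Quotient)

/-- `prodSeq x a b = x a * x (a+1) * ⋯ * x b` (it is `x a` when `b ≤ a`). -/
def prodSeq {M : Type*} [Mul M] (x : ℕ → M) (a b : ℕ) : M :=
  (List.range (b - a)).foldl (fun acc i => acc * x (a + i + 1)) (x a)

/-- The word `x̄_a x̄_{a+1} ⋯ x̄_b` in the free semigroup on `{ē : e ∈ B}`. -/
def freeWord {B : Type*} (x : ℕ → B) (a b : ℕ) : FreeSemigroup B :=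
  prodSeq (fun i => FreeSemigroup.of (x i)) a b

/-- The element `x̄_a x̄_{a+1} ⋯ x̄_b` of `IG B`. -/
def igWord {B : Type*} [Semigroup B] (x : ℕ → B) (a b : ℕ) : IG B :=
  ((freeWord x a b : FreeSemigroup B) : (igCon B).Quotient)

/-- Green's relation `𝓡`: `a 𝓡 b` iff `a = b` or `as = b`, `bt = a` for some `s, t`. -/
def GreenR {S : Type*} [Semigroup S] (a b : S) : Prop :=
  a = b ∨ ∃ s t : S, a * s = b ∧ b * t = a

/-- Green's relation `𝓛`: `a 𝓛 b` iff `a = b` or `sa = b`, `tb = a` for some `s, t`. -/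
def GreenL {S : Type*} [Semigroup S] (a b : S) : Prop :=
  a = b ∨ ∃ s t : S, s * a = b ∧ t * b = a

/-- `a 𝓡* b` iff for all `x, y ∈ S¹`, `xa = ya ↔ xb = yb`. -/
def RStar {S : Type*} [Semigroup S] (a b : S) : Prop :=
  ∀ x y : WithOne S,
    x * (a : WithOne S) = y * (a : WithOne S) ↔ x * (b : WithOne S) = y * (b : WithOne S)

/-- `a 𝓛* b` iff for all `x, y ∈ S¹`, `ax = ay ↔ bx = by`. -/
def LStar {S : Type*} [Semigroup S] (a b : S) : Prop :=
  ∀ x y : WithOne S,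
    (a : WithOne S) * x = (a : WithOne S) * y ↔ (b : WithOne S) * x = (b : WithOne S) * y

/-- `a 𝓡̃ b` iff for every idempotent `e`, `ea = a ↔ eb = b`. -/
def RTilde {S : Type*} [Semigroup S] (a b : S) : Prop :=
  ∀ e : S, IsIdempotentElem e → (e * a = a ↔ e * b = b)

/-- `a 𝓛̃ b` iff for every idempotent `e`, `ae = a ↔ be = b`. -/
def LTilde {S : Type*} [Semigroup S] (a b : S) : Prop :=
  ∀ e : S, IsIdempotentElem e → (a * e = a ↔ b * e = b)

/-- A semigroup is *abundant* if every `𝓡*`-class and every `𝓛*`-class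
contains an idempotent. -/
def Abundant (S : Type*) [Semigroup S] : Prop :=
  ∀ a : S, (∃ e : S, IsIdempotentElem e ∧ RStar a e) ∧
    (∃ e : S, IsIdempotentElem e ∧ LStar a e)

/-- A semigroup is *weakly abundant* if every `𝓡̃`-class and every `𝓛̃`-class
contains an idempotent. -/
def WeaklyAbundant (S : Type*) [Semigroup S] : Prop :=
  ∀ a : S, (∃ e : S, IsIdempotentElem e ∧ RTilde a e) ∧
    (∃ e : S, IsIdempotentElem e ∧ LTilde a e)

/-- On a band, `x` and `y` are `𝒟`-equivalent iff `xyx = x` and `yxy = y`. -/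
def dEquiv {B : Type*} [Mul B] (x y : B) : Prop :=
  x * y * x = x ∧ y * x * y = y

/-- On a band, `x` and `y` are `𝒥`-incomparable iff `xyx ≠ x` and `yxy ≠ y`. -/
def jIncomp {B : Type*} [Mul B] (x y : B) : Prop :=
  x * y * x ≠ x ∧ y * x * y ≠ y

/-- One step of the reduction system induced by the presentation of `IG B`:
replace a factor `ē f̄`, with `(e,f)` a basic pair, by `(ef)‾`. -/
def RedStep {B : Type*} [Semigroup B] (w w' : FreeSemigroup B) : Prop :=
  ∃ (p q : List B) (e f : B), basicPair e f ∧
    w.head :: w.tail = p ++ e :: f :: q ∧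
    w'.head :: w'.tail = p ++ (e * f) :: q

/-- A word is in *normal form* (irreducible) if no reduction step applies. -/
def IsNF {B : Type*} [Semigroup B] (w : FreeSemigroup B) : Prop :=
  ∀ w', ¬ RedStep w w'

/-- `x̄₁ ⋯ x̄ₙ` (letters `x 1, …, x n`) is in *almost normal form* witnessed by
block boundaries `idx 0 = 0 < idx 1 < ⋯ < idx r = n`: within each block all
letters are `𝒟`-equivalent, and letters in adjacent blocks are incomparable. -/
def AlmostNF {B : Type*} [Mul B] (x : ℕ → B) (n r : ℕ) (idx : ℕ → ℕ) : Prop :=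
  1 ≤ r ∧ idx 0 = 0 ∧ idx r = n ∧
  (∀ k < r, idx k < idx (k + 1)) ∧
  (∀ k < r, ∀ p q : ℕ, idx k < p → p ≤ idx (k + 1) → idx k < q → q ≤ idx (k + 1) →
    dEquiv (x p) (x q)) ∧
  (∀ k : ℕ, k + 1 < r → ∀ p q : ℕ, idx k < p → p ≤ idx (k + 1) →
    idx (k + 1) < q → q ≤ idx (k + 2) → jIncomp (x p) (x q))

/-- Condition (P) for `IG B`. -/
def CondP (B : Type*) [Semigroup B] : Prop :=
  ∀ (n m r : ℕ) (u v : ℕ → B) (iu iv : ℕ → ℕ),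
    AlmostNF u n r iu → AlmostNF v m r iv →
    igWord u 1 n = igWord v 1 m →
    ((∀ s : ℕ, 1 ≤ s → s ≤ r →
        (u (iu s) * v (iv s) = u (iu s) ∧ v (iv s) * u (iu s) = v (iv s)) →
        igWord u 1 (iu s) = igWord v 1 (iv s)) ∧
      (∀ t : ℕ, t + 1 ≤ r →
        (u (iu t + 1) * v (iv t + 1) = v (iv t + 1) ∧
          v (iv t + 1) * u (iu t + 1) = u (iu t + 1)) →
        igWord u (iu t + 1) n = igWord v (iv t + 1) m))

/-- A normal band is *pliant* if for every `𝒟`-class `D` there is `c ∈ D` with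
`u e u = c` for every `e ∈ D` and every `u` strictly `𝒥`-above `D`. -/
def Pliant (B : Type*) [Mul B] : Prop :=
  ∀ d : B, ∃ c : B, dEquiv c d ∧
    ∀ e u : B, dEquiv e d → (e * u * e = e ∧ u * e * u ≠ u) → u * e * u = c

set_option linter.unusedSectionVars false

namespace IGNF

variable {Y : Type*} [Semigroup Y]

/-- comparability -/
def Cmp (e f : Y) : Prop := e * f = e ∨ e * f = f

/-- list-level reduction step -/
inductive LStep : List Y → List Y → Prop
  | head (e f : Y) (h : Cmp e f) (q : List Y) : LStep (e :: f :: q) ((e * f) :: q)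
  | cons (a : Y) {l l' : List Y} : LStep l l' → LStep (a :: l) (a :: l')

lemma lstep_iff {l l' : List Y} :
    LStep l l' ↔ ∃ (p q : List Y) (e f : Y), Cmp e f ∧
      l = p ++ e :: f :: q ∧ l' = p ++ (e * f) :: q := by
  constructor
  · intro h
    induction h with
    | head e f h q => exact ⟨[], q, e, f, h, rfl, rfl⟩
    | cons a _ ih =>
      obtain ⟨p, q, e, f, hc, h1, h2⟩ := ih
      exact ⟨a :: p, q, e, f, hc, by simp [h1], by simp [h2]⟩
  · rintro ⟨p, q, e, f, hc, rfl, rfl⟩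
    induction p with
    | nil => exact LStep.head e f hc q
    | cons a p ih => exact LStep.cons a ih

lemma lstep_ne_nil {l l' : List Y} (h : LStep l l') : l' ≠ [] := by
  induction h with
  | head => simp
  | cons => simp

/-- lift a ReflGen step under cons -/
lemma reflGen_cons {l l' : List Y} (a : Y) (h : Relation.ReflGen LStep l l') :
    Relation.ReflGen LStep (a :: l) (a :: l') := by
  cases h with
  | refl => exact Relation.ReflGen.refl
  | single h => exact Relation.ReflGen.single (LStep.cons a h)

lemma head_diamond {e f : Y} (hef : Cmp e f) {q c : List Y}
    (h : LStep (e :: f :: q) c) :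
    ∃ d, Relation.ReflGen LStep ((e * f) :: q) d ∧ Relation.ReflGen LStep c d := by
  cases h with
  | head e f h q => exact ⟨_, Relation.ReflGen.refl, Relation.ReflGen.refl⟩
  | cons a h' =>
    cases h' with
    | head f g hfg q₂ =>
      rcases hef with hef | hef
      · rcases hfg with hfg | hfg
        · have heg : e * g = e := by
            have : e * g = e * f * g := by rw [hef]
            rw [this, mul_assoc, hfg, hef]
          refine ⟨e :: q₂, ?_, ?_⟩
          · rw [hef]
            have := LStep.head e g (Or.inl heg) q₂
            rw [heg] at this
            exact Relation.ReflGen.single this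
          · rw [hfg]
            have := LStep.head e f (Or.inl hef) q₂
            rw [hef] at this
            exact Relation.ReflGen.single this
        · rw [hef, hfg]
          exact ⟨e :: g :: q₂, Relation.ReflGen.refl, Relation.ReflGen.refl⟩
      · rcases hfg with hfg | hfg
        · refine ⟨f :: q₂, ?_, ?_⟩
          · rw [hef]
            have := LStep.head f g (Or.inl hfg) q₂
            rw [hfg] at this
            exact Relation.ReflGen.single this
          · rw [hfg]
            have := LStep.head e f (Or.inr hef) q₂
            rw [hef] at this
            exact Relation.ReflGen.single this
        · have heg : e * g = g := by
            have : e * g = e * (f * g) := by rw [hfg]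
            rw [this, ← mul_assoc, hef, hfg]
          refine ⟨g :: q₂, ?_, ?_⟩
          · rw [hef]
            have := LStep.head f g (Or.inr hfg) q₂
            rw [hfg] at this
            exact Relation.ReflGen.single this
          · rw [hfg]
            have := LStep.head e g (Or.inr heg) q₂
            rw [heg] at this
            exact Relation.ReflGen.single this
    | cons b h'' =>
      rename_i l'
      exact ⟨(e * f) :: l', Relation.ReflGen.single (LStep.cons _ h''),
        Relation.ReflGen.single (LStep.head e f hef l')⟩

lemma ldiamond {l b c : List Y} (h1 : LStep l b) (h2 : LStep l c) :
    ∃ d, Relation.ReflGen LStep b d ∧ Relation.ReflGen LStep c d := by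
  induction h1 generalizing c with
  | head e f hef q => exact head_diamond hef h2
  | cons a h1' ih =>
    cases h2 with
    | head e f hef q =>
      obtain ⟨d, hd1, hd2⟩ := head_diamond hef (LStep.cons _ h1')
      exact ⟨d, hd2, hd1⟩
    | cons a h2' =>
      obtain ⟨d, hd1, hd2⟩ := ih h2'
      exact ⟨a :: d, reflGen_cons a hd1, reflGen_cons a hd2⟩

/-! transfer to `FreeSemigroup` -/

def toL (w : FreeSemigroup Y) : List Y := w.head :: w.tail

lemma toL_ne_nil (w : FreeSemigroup Y) : toL w ≠ [] := by simp [toL]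

lemma toL_inj {v w : FreeSemigroup Y} (h : toL v = toL w) : v = w := by
  cases v; cases w
  simp only [toL, List.cons.injEq] at h
  simp [h.1, h.2]

lemma toL_mul (v w : FreeSemigroup Y) : toL (v * w) = toL v ++ toL w := rfl

lemma toL_of (e : Y) : toL (FreeSemigroup.of e) = [e] := rfl

/-- section of `toL` -/
def ofL : (l : List Y) → l ≠ [] → FreeSemigroup Y
  | a :: t, _ => ⟨a, t⟩

lemma toL_ofL (l : List Y) (h : l ≠ []) : toL (ofL l h) = l := by
  cases l with
  | nil => exact absurd rfl h
  | cons a t => rfl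

variable (hcomm : ∀ a b : Y, a * b = b * a)

include hcomm in
lemma basicPair_iff_cmp (e f : Y) : basicPair e f ↔ Cmp e f := by
  unfold basicPair Cmp
  rw [hcomm f e]
  tauto

include hcomm in
lemma redStep_iff_lstep {v w : FreeSemigroup Y} : RedStep v w ↔ LStep (toL v) (toL w) := by
  rw [lstep_iff]
  unfold RedStep toL
  constructor
  · rintro ⟨p, q, e, f, hb, h1, h2⟩
    exact ⟨p, q, e, f, (basicPair_iff_cmp hcomm e f).mp hb, h1, h2⟩
  · rintro ⟨p, q, e, f, hc, h1, h2⟩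
    exact ⟨p, q, e, f, (basicPair_iff_cmp hcomm e f).mpr hc, h1, h2⟩

include hcomm in
lemma reflGen_transfer {b : FreeSemigroup Y} {d : List Y} (hdne : d ≠ [])
    (h : Relation.ReflGen LStep (toL b) d) :
    Relation.ReflGen RedStep b (ofL d hdne) := by
  cases h with
  | refl =>
    have : ofL (toL b) hdne = b := toL_inj (by rw [toL_ofL])
    rw [this]
  | single h =>
    exact Relation.ReflGen.single
      ((redStep_iff_lstep hcomm).mpr (by rwa [toL_ofL]))

include hcomm in
lemma redStep_diamond {w b c : FreeSemigroup Y} (h1 : RedStep w b) (h2 : RedStep w c) :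
    ∃ d, Relation.ReflGen RedStep b d ∧ Relation.ReflGen RedStep c d := by
  rw [redStep_iff_lstep hcomm] at h1 h2
  obtain ⟨d, hd1, hd2⟩ := ldiamond h1 h2
  have hdne : d ≠ [] := by
    cases hd1 with
    | refl => exact toL_ne_nil b
    | single h => exact lstep_ne_nil h
  exact ⟨ofL d hdne, reflGen_transfer hcomm hdne hd1, reflGen_transfer hcomm hdne hd2⟩

include hcomm in
lemma confluence {a b c : FreeSemigroup Y}
    (hab : Relation.ReflTransGen RedStep a b) (hac : Relation.ReflTransGen RedStep a c) :
    Relation.Join (Relation.ReflTransGen RedStep) b c :=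
  Relation.church_rosser
    (fun _ _ _ h1 h2 => by
      obtain ⟨d, hd1, hd2⟩ := redStep_diamond hcomm h1 h2
      exact ⟨d, hd1, hd2.to_reflTransGen⟩) hab hac

/-! reduction steps are contained in the congruence -/

lemma igCon_of_base {e f : Y} (hb : basicPair e f) (q : List Y) :
    igCon Y (⟨e, f :: q⟩ : FreeSemigroup Y) ⟨e * f, q⟩ := by
  have base : igCon Y (FreeSemigroup.of e * FreeSemigroup.of f) (FreeSemigroup.of (e * f)) :=
    ConGen.Rel.of _ _ ⟨e, f, hb, rfl, rfl⟩
  cases q with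
  | nil => exact base
  | cons g q' =>
    have := (igCon Y).mul base ((igCon Y).refl (⟨g, q'⟩ : FreeSemigroup Y))
    convert this using 2 <;> rfl

lemma igCon_of_listdecomp (p : List Y) (q : List Y) (e f : Y) (hb : basicPair e f) :
    ∀ v w : FreeSemigroup Y, toL v = p ++ e :: f :: q → toL w = p ++ (e * f) :: q →
      igCon Y v w := by
  induction p with
  | nil =>
    intro v w h1 h2
    have hv : v = (⟨e, f :: q⟩ : FreeSemigroup Y) := toL_inj (by rw [h1]; rfl)
    have hw : w = (⟨e * f, q⟩ : FreeSemigroup Y) := toL_inj (by rw [h2]; rfl)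
    rw [hv, hw]
    exact igCon_of_base hb q
  | cons a p ih =>
    intro v w h1 h2
    have hne1 : p ++ e :: f :: q ≠ [] := by simp
    have hne2 : p ++ (e * f) :: q ≠ [] := by simp
    have hv : v = FreeSemigroup.of a * ofL _ hne1 :=
      toL_inj (by rw [h1, toL_mul, toL_of, toL_ofL]; rfl)
    have hw : w = FreeSemigroup.of a * ofL _ hne2 :=
      toL_inj (by rw [h2, toL_mul, toL_of, toL_ofL]; rfl)
    rw [hv, hw]
    exact (igCon Y).mul ((igCon Y).refl _)
      (ih _ _ (toL_ofL _ hne1) (toL_ofL _ hne2))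

lemma igCon_of_redStep {v w : FreeSemigroup Y} (h : RedStep v w) : igCon Y v w := by
  obtain ⟨p, q, e, f, hb, h1, h2⟩ := h
  exact igCon_of_listdecomp p q e f hb v w h1 h2

lemma igCon_of_rtg {v w : FreeSemigroup Y} (h : Relation.ReflTransGen RedStep v w) :
    igCon Y v w := by
  induction h with
  | refl => exact (igCon Y).refl v
  | tail _ hstep ih => exact (igCon Y).trans ih (igCon_of_redStep hstep)

/-! the congruence is contained in joinability -/

lemma redStep_mul_left (a : FreeSemigroup Y) {v w : FreeSemigroup Y} (h : RedStep v w) :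
    RedStep (a * v) (a * w) := by
  obtain ⟨p, q, e, f, hb, h1, h2⟩ := h
  refine ⟨toL a ++ p, q, e, f, hb, ?_, ?_⟩
  · show toL (a * v) = _
    rw [toL_mul]
    show toL a ++ toL v = _
    rw [show toL v = _ from h1, List.append_assoc]
  · show toL (a * w) = _
    rw [toL_mul]
    show toL a ++ toL w = _
    rw [show toL w = _ from h2, List.append_assoc]

lemma redStep_mul_right (a : FreeSemigroup Y) {v w : FreeSemigroup Y} (h : RedStep v w) :
    RedStep (v * a) (w * a) := by
  obtain ⟨p, q, e, f, hb, h1, h2⟩ := h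
  refine ⟨p, q ++ toL a, e, f, hb, ?_, ?_⟩
  · show toL (v * a) = _
    rw [toL_mul, show toL v = _ from h1]
    simp
  · show toL (w * a) = _
    rw [toL_mul, show toL w = _ from h2]
    simp

lemma rtg_mul {a b c d : FreeSemigroup Y}
    (h1 : Relation.ReflTransGen RedStep a b) (h2 : Relation.ReflTransGen RedStep c d) :
    Relation.ReflTransGen RedStep (a * c) (b * d) := by
  have left : Relation.ReflTransGen RedStep (a * c) (b * c) :=
    Relation.ReflTransGen.lift (· * c) (fun _ _ h => redStep_mul_right c h) _ _ h1
  have right : Relation.ReflTransGen RedStep (b * c) (b * d) :=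
    Relation.ReflTransGen.lift (b * ·) (fun _ _ h => redStep_mul_left b h) _ _ h2
  exact left.trans right

include hcomm in
lemma igCon_le_join {v w : FreeSemigroup Y} (h : igCon Y v w) :
    Relation.Join (Relation.ReflTransGen RedStep) v w := by
  induction h with
  | of x y hxy =>
    obtain ⟨e, f, hb, rfl, rfl⟩ := hxy
    refine ⟨FreeSemigroup.of (e * f), Relation.ReflTransGen.single ?_,
      Relation.ReflTransGen.refl⟩
    exact ⟨[], [], e, f, hb, rfl, rfl⟩
  | refl x => exact ⟨x, Relation.ReflTransGen.refl, Relation.ReflTransGen.refl⟩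
  | symm _ ih => exact ⟨ih.choose, ih.choose_spec.2, ih.choose_spec.1⟩
  | trans h1 h2 ih1 ih2 =>
    obtain ⟨d1, hx1, hy1⟩ := ih1
    obtain ⟨d2, hy2, hz2⟩ := ih2
    obtain ⟨d, hd1, hd2⟩ := confluence hcomm hy1 hy2
    exact ⟨d, hx1.trans hd1, hz2.trans hd2⟩
  | mul h1 h2 ih1 ih2 =>
    obtain ⟨d1, ha1, hb1⟩ := ih1
    obtain ⟨d2, ha2, hb2⟩ := ih2
    exact ⟨d1 * d2, rtg_mul ha1 ha2, rtg_mul hb1 hb2⟩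

/-! normalization -/

lemma redStep_length {v w : FreeSemigroup Y} (h : RedStep v w) :
    w.tail.length < v.tail.length := by
  obtain ⟨p, q, e, f, _, h1, h2⟩ := h
  have l1 := congrArg List.length h1
  have l2 := congrArg List.length h2
  simp only [List.length_cons, List.length_append] at l1 l2
  omega

lemma exists_nf (w : FreeSemigroup Y) :
    ∃ u, IsNF u ∧ Relation.ReflTransGen RedStep w u := by
  by_cases h : IsNF w
  · exact ⟨w, h, Relation.ReflTransGen.refl⟩
  · simp only [IsNF, not_forall, not_not] at h
    obtain ⟨w', hw'⟩ := h
    have := redStep_length hw'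
    obtain ⟨u, hu, hru⟩ := exists_nf w'
    exact ⟨u, hu, Relation.ReflTransGen.head hw' hru⟩
termination_by w.tail.length

lemma nf_rtg_eq {u d : FreeSemigroup Y} (hu : IsNF u)
    (h : Relation.ReflTransGen RedStep u d) : u = d := by
  rcases Relation.ReflTransGen.cases_head h with rfl | ⟨c, hc, _⟩
  · rfl
  · exact absurd hc (hu c)

/-! the chain characterization -/

lemma chain'_middle {R : Y → Y → Prop} :
    ∀ (p : List Y) {a b : Y} {q : List Y}, List.Chain' R (p ++ a :: b :: q) → R a b := by
  intro p
  induction p with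
  | nil => intro a b q h; exact (List.isChain_cons_cons.mp h).1
  | cons c p ih => intro a b q h; exact ih h.tail

lemma not_chain'_decomp :
    ∀ (l : List Y), ¬ List.Chain' (fun a b : Y => ¬ (a * b = a ∨ a * b = b)) l →
      ∃ (p : List Y) (a b : Y) (q : List Y), l = p ++ a :: b :: q ∧ Cmp a b := by
  intro l
  induction l with
  | nil => intro h; exact absurd List.isChain_nil h
  | cons a l ih =>
    intro h
    cases l with
    | nil => exact absurd (List.isChain_singleton a) h
    | cons b t =>
      rw [List.Chain', List.isChain_cons_cons] at h
      by_cases hab : Cmp a b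
      · exact ⟨[], a, b, t, rfl, hab⟩
      · have : ¬ List.Chain' _ (b :: t) := fun hc => h ⟨hab, hc⟩
        obtain ⟨p, x, y, q, heq, hxy⟩ := ih this
        exact ⟨a :: p, x, y, q, by rw [heq]; rfl, hxy⟩

end IGNF

/-- Over a semilattice `Y`, a word is irreducible iff adjacent
letters are incomparable; every congruence class of `igCon Y` contains exactly
one irreducible word; and two words represent the same element of `IG Y` iff
they reduce to the same normal form. -/
theorem IG_semilattice_unique_normal_forms
    {Y : Type*} [Semigroup Y] (hcomm : ∀ a b : Y, a * b = b * a)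
    (hidem : ∀ a : Y, a * a = a) :
    (∀ w : FreeSemigroup Y, IsNF w ↔
      List.Chain' (fun a b : Y => ¬ (a * b = a ∨ a * b = b)) (w.head :: w.tail)) ∧
    (∀ w : FreeSemigroup Y, ∃! u : FreeSemigroup Y, igCon Y w u ∧ IsNF u) ∧
    (∀ v w : FreeSemigroup Y, igCon Y v w ↔
      ∃ u : FreeSemigroup Y, IsNF u ∧ Relation.ReflTransGen RedStep v u ∧
        Relation.ReflTransGen RedStep w u) := by
  refine ⟨?_, ?_, ?_⟩
  · intro w
    constructor
    · intro hnf
      by_contra hch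
      obtain ⟨p, a, b, q, heq, hab⟩ := IGNF.not_chain'_decomp _ hch
      have hne : p ++ (a * b) :: q ≠ [] := by simp
      have hb : basicPair a b := by
        rcases hab with h | h
        · exact Or.inl h
        · exact Or.inr (Or.inl h)
      exact hnf (IGNF.ofL _ hne) ⟨p, q, a, b, hb, heq, IGNF.toL_ofL _ hne⟩
    · rintro hch w' ⟨p, q, e, f, hb, h1, h2⟩
      rw [h1] at hch
      exact IGNF.chain'_middle p hch ((IGNF.basicPair_iff_cmp hcomm e f).mp hb)
  · intro w
    obtain ⟨u, hu, hru⟩ := IGNF.exists_nf w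
    refine ⟨u, ⟨IGNF.igCon_of_rtg hru, hu⟩, ?_⟩
    rintro u' ⟨hcon, hu'⟩
    have h : igCon Y u' u := (igCon Y).trans ((igCon Y).symm hcon) (IGNF.igCon_of_rtg hru)
    obtain ⟨d, h1, h2⟩ := IGNF.igCon_le_join hcomm h
    exact (IGNF.nf_rtg_eq hu' h1).trans (IGNF.nf_rtg_eq hu h2).symm
  · intro v w
    constructor
    · intro h
      obtain ⟨d, h1, h2⟩ := IGNF.igCon_le_join hcomm h
      obtain ⟨u, hu, hdu⟩ := IGNF.exists_nf d
      exact ⟨u, hu, h1.trans hdu, h2.trans hdu⟩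
    · rintro ⟨u, _, h1, h2⟩
      exact (igCon Y).trans (IGNF.igCon_of_rtg h1) ((igCon Y).symm (IGNF.igCon_of_rtg h2))
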